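/- If X ∼ BSN(λ, a, b), then −X ∼ BSN(−λ, b, a); equivalently, for all real x, all real λ and all a, b > 0, the densities satisfy g(−x; λ, a, b) = g(x; −λ, b, a). -/

import Mathlib

open MeasureTheory

/-- Standard normal density. -/
noncomputable def normPdf (x : ℝ) : ℝ := Real.exp (-x ^ 2 / 2) / Real.sqrt (2 * Real.pi)

/-- Standard normal cdf. -/
noncomputable def normCdf (x : ℝ) : ℝ := ∫ t in Set.Iic x, normPdf t

/-- Skew-normal cdf with parameter `l`. -/
noncomputable def snCdf (l z : ℝ) : ℝ := ∫ t in Set.Iic z, 2 * normPdf t * normCdf (l * t)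

/-- The Beta function. -/
noncomputable def betaFn (a b : ℝ) : ℝ := Real.Gamma a * Real.Gamma b / Real.Gamma (a + b)

/-- The Beta skew-normal density with parameters `l`, `a`, `b`. -/
noncomputable def bsnPdf (l a b x : ℝ) : ℝ :=
  (2 / betaFn a b) * snCdf l x ^ (a - 1) * (1 - snCdf l x) ^ (b - 1) * normPdf x *
    normCdf (l * x)

lemma normPdf_nonneg (x : ℝ) : 0 ≤ normPdf x := by
  unfold normPdf
  positivity

lemma normPdf_neg (x : ℝ) : normPdf (-x) = normPdf x := by
  simp [normPdf]

lemma integrable_normPdf : Integrable normPdf := by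
  have h : Integrable fun x : ℝ => Real.exp (-(1/2) * x ^ 2) :=
    integrable_exp_neg_mul_sq (by norm_num)
  have := h.div_const (Real.sqrt (2 * Real.pi))
  convert this using 2 with x
  unfold normPdf
  ring_nf

lemma integral_normPdf : ∫ x, normPdf x = 1 := by
  have h : ∫ x : ℝ, Real.exp (-(1/2) * x ^ 2) = Real.sqrt (Real.pi / (1/2)) :=
    integral_gaussian (1/2)
  have h2 : (∫ x, normPdf x) = (∫ x : ℝ, Real.exp (-(1/2) * x ^ 2)) / Real.sqrt (2 * Real.pi) := by
    rw [← integral_div]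
    congr 1 with x
    unfold normPdf
    ring_nf
  rw [h2, h]
  rw [show Real.pi / (1/2) = 2 * Real.pi by ring]
  rw [div_self]
  positivity

lemma normCdf_nonneg (x : ℝ) : 0 ≤ normCdf x :=
  setIntegral_nonneg measurableSet_Iic fun t _ => normPdf_nonneg t

lemma normCdf_le_one (x : ℝ) : normCdf x ≤ 1 := by
  rw [← integral_normPdf]
  exact setIntegral_le_integral integrable_normPdf
    (Filter.Eventually.of_forall fun t => normPdf_nonneg t)

lemma normCdf_mono : Monotone normCdf := fun x y hxy =>
  setIntegral_mono_set integrable_normPdf.integrableOn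
    (Filter.Eventually.of_forall fun t => normPdf_nonneg t)
    (Filter.Eventually.of_forall (Set.Iic_subset_Iic.2 hxy))

lemma measurable_normCdf : Measurable normCdf := normCdf_mono.measurable

lemma snIntegrand_nonneg (l t : ℝ) : 0 ≤ 2 * normPdf t * normCdf (l * t) := by
  have := normPdf_nonneg t
  have := normCdf_nonneg (l * t)
  positivity

lemma integrable_snIntegrand (l : ℝ) :
    Integrable fun t => 2 * normPdf t * normCdf (l * t) := by
  refine Integrable.mono' (integrable_normPdf.const_mul 2) ?_ ?_
  · exact ((integrable_normPdf.aemeasurable.const_mul 2).mul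
      (measurable_normCdf.comp (measurable_const_mul l)).aemeasurable).aestronglyMeasurable
  · refine Filter.Eventually.of_forall fun t => ?_
    rw [Real.norm_eq_abs, abs_of_nonneg (snIntegrand_nonneg l t)]
    have h1 := normCdf_le_one (l * t)
    have h2 := normPdf_nonneg t
    nlinarith

lemma snIntegrand_neg (l t : ℝ) :
    2 * normPdf (-t) * normCdf (l * -t) = 2 * normPdf t * normCdf (-l * t) := by
  rw [normPdf_neg, show l * -t = -l * t by ring]

lemma snIntegrand_add (l t : ℝ) :
    2 * normPdf t * normCdf (l * t) + 2 * normPdf t * normCdf (-l * t) = 2 * normPdf t := by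
  have h : normCdf (l * t) + normCdf (-l * t) = 1 := by
    have hneg : normCdf (-(l * t)) = ∫ s in Set.Ioi (l * t), normPdf s := by
      unfold normCdf
      rw [← integral_comp_neg_Ioi]
      simp only [normPdf_neg]
    have hsplit := intervalIntegral.integral_Iic_add_Ioi (b := l * t)
      integrable_normPdf.integrableOn integrable_normPdf.integrableOn
    rw [integral_normPdf] at hsplit
    rw [show -l * t = -(l * t) by ring, hneg]
    exact hsplit
  linear_combination 2 * normPdf t * h

lemma integral_snIntegrand (l : ℝ) : ∫ t, 2 * normPdf t * normCdf (l * t) = 1 := by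
  have hflip : (∫ t, 2 * normPdf t * normCdf (l * t)) =
      ∫ t, 2 * normPdf t * normCdf (-l * t) := by
    rw [← MeasureTheory.integral_neg_eq_self (fun t => 2 * normPdf t * normCdf (l * t)) volume]
    congr 1 with t
    exact snIntegrand_neg l t
  have hadd : (∫ t, 2 * normPdf t * normCdf (l * t)) +
      (∫ t, 2 * normPdf t * normCdf (-l * t)) = 2 := by
    rw [← integral_add (integrable_snIntegrand l) (integrable_snIntegrand (-l))]
    have : (∫ t, (2 * normPdf t * normCdf (l * t) + 2 * normPdf t * normCdf (-l * t)))
        = ∫ t, 2 * normPdf t := by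
      congr 1 with t; exact snIntegrand_add l t
    rw [this, integral_const_mul, integral_normPdf]
    norm_num
  linarith [hflip, hadd]

lemma snCdf_neg (l x : ℝ) : snCdf l (-x) = 1 - snCdf (-l) x := by
  unfold snCdf
  have h1 : (∫ t in Set.Iic (-x), 2 * normPdf t * normCdf (l * t)) =
      ∫ t in Set.Ioi x, 2 * normPdf t * normCdf (-l * t) := by
    rw [← integral_comp_neg_Ioi]
    simp only [snIntegrand_neg]
  have hsplit := intervalIntegral.integral_Iic_add_Ioi (b := x)
    (integrable_snIntegrand (-l)).integrableOn (integrable_snIntegrand (-l)).integrableOn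
  rw [integral_snIntegrand (-l)] at hsplit
  rw [h1]
  linarith

/-- If `X ∼ BSN(l, a, b)` then `-X ∼ BSN(-l, b, a)`: the densities satisfy
`g(-x; l, a, b) = g(x; -l, b, a)`. -/
theorem bsn_neg (l a b : ℝ) (ha : 0 < a) (hb : 0 < b) (x : ℝ) :
    bsnPdf l a b (-x) = bsnPdf (-l) b a x := by
  unfold bsnPdf
  rw [snCdf_neg, normPdf_neg, show l * -x = -l * x by ring,
    show betaFn a b = betaFn b a by unfold betaFn; rw [add_comm]; ring]
  ring
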